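/- Let ℓ ≥ 1 be an integer, let p, p', q ∈ (0,1) with q = p or q = p'. Let Z, Z', S be independent random variables where Z is Bernoulli with parameter p, Z' is Bernoulli with parameter p', and S is binomial with parameters ℓ and q. Then KL(Z+S, Z'+S) = ∑_{k=0}^{ℓ+1} P(Z+S = k) · log( ((p − q)·k + (1 − p)·q·(ℓ+1)) / ((p' − q)·k + (1 − p')·q·(ℓ+1)) ). -/

import Mathlib

/-- Probability mass function on ℕ of a Bernoulli distribution with parameter `p`. -/
noncomputable def bernoulliPMF (p : ℝ) : ℕ → ℝ :=
  fun k => if k = 0 then 1 - p else if k = 1 then p else 0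

/-- Probability mass function on ℕ of a binomial distribution with parameters `m` and `q`. -/
noncomputable def binomialPMF (m : ℕ) (q : ℝ) : ℕ → ℝ :=
  fun k => (m.choose k : ℝ) * q ^ k * (1 - q) ^ (m - k)

/-- Convolution of two mass functions on ℕ: the law of an independent sum. -/
noncomputable def convPMF (P Q : ℕ → ℝ) : ℕ → ℝ :=
  fun k => ∑ j ∈ Finset.range (k + 1), P j * Q (k - j)

/-- Kullback-Leibler divergence between two mass functions on ℕ
(with the convention `0 * log 0 = 0`, which holds automatically here). -/
noncomputable def klDivN (P Q : ℕ → ℝ) : ℝ :=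
  ∑' k, P k * Real.log (P k / Q k)

lemma conv_zero_of_big (ℓ : ℕ) (p q : ℝ) (k : ℕ) (hk : ℓ + 2 ≤ k) :
    convPMF (bernoulliPMF p) (binomialPMF ℓ q) k = 0 := by
  unfold convPMF
  apply Finset.sum_eq_zero
  intro j hj
  by_cases h0 : j = 0
  · subst h0
    have hb : binomialPMF ℓ q (k - 0) = 0 := by
      simp [binomialPMF, Nat.choose_eq_zero_of_lt (show ℓ < k by omega)]
    rw [hb, mul_zero]
  · by_cases h1 : j = 1
    · subst h1
      have hb : binomialPMF ℓ q (k - 1) = 0 := by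
        simp [binomialPMF, Nat.choose_eq_zero_of_lt (show ℓ < k - 1 by omega)]
      rw [hb, mul_zero]
    · simp [bernoulliPMF, h0, h1]

lemma conv_formula (ℓ : ℕ) (p q : ℝ) (hq0 : q ≠ 0) (hq1 : q ≠ 1) (k : ℕ) (hk : k ≤ ℓ + 1) :
    convPMF (bernoulliPMF p) (binomialPMF ℓ q) k =
      (((ℓ + 1).choose k : ℝ) * q ^ k * (1 - q) ^ (ℓ + 1 - k) / (q * (1 - q) * ((ℓ : ℝ) + 1))) *
        ((p - q) * (k : ℝ) + (1 - p) * q * ((ℓ : ℝ) + 1)) := by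
  have hq1' : (1 : ℝ) - q ≠ 0 := by intro h; apply hq1; linarith
  have hl : ((ℓ : ℝ) + 1) ≠ 0 := by positivity
  match k with
  | 0 =>
    simp only [convPMF, bernoulliPMF, binomialPMF, Finset.sum_range_one, if_pos rfl,
      Nat.choose_zero_right, pow_zero, Nat.sub_zero, Nat.cast_one, Nat.cast_zero, pow_succ, zero_add, if_true]
    field_simp
    ring
  | n + 1 =>
    have hsub : ∑ j ∈ Finset.range (n + 2),
        bernoulliPMF p j * binomialPMF ℓ q (n + 1 - j) =
        ∑ j ∈ Finset.range 2, bernoulliPMF p j * binomialPMF ℓ q (n + 1 - j) := by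
      symm
      apply Finset.sum_subset
      · intro x hx; simp at hx ⊢; omega
      · intro x hx hx2
        simp at hx hx2
        simp [bernoulliPMF, show x ≠ 0 by omega, show x ≠ 1 by omega]
    unfold convPMF
    rw [hsub]
    rw [Finset.sum_range_succ, Finset.sum_range_one]
    simp only [bernoulliPMF, binomialPMF, if_pos rfl, if_neg one_ne_zero, if_pos rfl,
      Nat.sub_zero, Nat.add_sub_cancel]
    have hn : n ≤ ℓ := by omega
    rcases Nat.lt_or_ge n ℓ with hlt | hge
    · obtain ⟨m, rfl⟩ : ∃ m, ℓ = n + 1 + m := ⟨ℓ - (n + 1), by omega⟩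
      have e1 : n + 1 + m - (n + 1) = m := by omega
      have e2 : n + 1 + m - n = m + 1 := by omega
      have e3 : n + 1 + m + 1 - (n + 1) = m + 1 := by omega
      rw [e1, e2, e3]
      have hA : ((n + 1 + m).choose (n + 1) : ℝ) * ((n : ℝ) + 1 + m + 1) =
          ((n + 1 + m + 1).choose (n + 1) : ℝ) * ((m : ℝ) + 1) := by
        have := Nat.choose_mul_succ_eq (n + 1 + m) (n + 1)
        have h2 : (n + 1 + m).choose (n + 1) * (n + 1 + m + 1) =
            (n + 1 + m + 1).choose (n + 1) * (m + 1) := by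
          rw [this, show n + 1 + m + 1 - (n + 1) = m + 1 from by omega]
        exact_mod_cast congrArg (Nat.cast : ℕ → ℝ) h2
      have hB : ((n + 1 + m).choose n : ℝ) * ((n : ℝ) + 1 + m + 1) =
          ((n + 1 + m + 1).choose (n + 1) : ℝ) * ((n : ℝ) + 1) := by
        have := Nat.add_one_mul_choose_eq (n + 1 + m) n
        have h2 : (n + 1 + m + 1) * (n + 1 + m).choose n =
            (n + 1 + m + 1).choose (n + 1) * (n + 1) := by
          simpa [Nat.succ_eq_add_one] using this
        have := congrArg (Nat.cast : ℕ → ℝ) h2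
        push_cast at this ⊢
        linarith
      have hcast : ((n + 1 + m : ℕ) : ℝ) = (n : ℝ) + 1 + m := by push_cast; ring
      rw [hcast]
      rw [div_mul_eq_mul_div, eq_div_iff (by positivity : q * (1 - q) * ((n : ℝ) + 1 + m + 1) ≠ 0)]
      push_cast
      push_cast at hA hB
      linear_combination ((1 - p) * q ^ (n + 2) * (1 - q) ^ (m + 1)) * hA +
        (p * q ^ (n + 1) * (1 - q) ^ (m + 2)) * hB
    · have : n = ℓ := by omega
      subst this
      simp only [Nat.sub_self, Nat.choose_succ_self, Nat.choose_self, pow_zero,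
        show n + 1 - (n + 1) = 0 by omega, show n + 1 - n = 1 by omega, Nat.cast_zero, Nat.cast_one]
      rw [div_mul_eq_mul_div, eq_div_iff (by positivity : q * (1 - q) * ((n : ℝ) + 1) ≠ 0)]
      push_cast
      ring

theorem stmt_9 (ℓ : ℕ) (hℓ : 1 ≤ ℓ)
    (p p' q : ℝ) (hp : p ∈ Set.Ioo (0 : ℝ) 1) (hp' : p' ∈ Set.Ioo (0 : ℝ) 1)
    (hq : q ∈ Set.Ioo (0 : ℝ) 1) (hqpp' : q = p ∨ q = p') :
    klDivN (convPMF (bernoulliPMF p) (binomialPMF ℓ q))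
        (convPMF (bernoulliPMF p') (binomialPMF ℓ q)) =
      ∑ k ∈ Finset.range (ℓ + 2),
        convPMF (bernoulliPMF p) (binomialPMF ℓ q) k *
          Real.log (((p - q) * (k : ℝ) + (1 - p) * q * ((ℓ : ℝ) + 1)) /
            ((p' - q) * (k : ℝ) + (1 - p') * q * ((ℓ : ℝ) + 1))) := by
  obtain ⟨hq0, hq1⟩ := hq
  have hq0' : q ≠ 0 := ne_of_gt hq0
  have hq1' : q ≠ 1 := ne_of_lt hq1
  unfold klDivN
  have hzero : ∀ k ∉ Finset.range (ℓ + 2),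
      convPMF (bernoulliPMF p) (binomialPMF ℓ q) k *
        Real.log (convPMF (bernoulliPMF p) (binomialPMF ℓ q) k /
          convPMF (bernoulliPMF p') (binomialPMF ℓ q) k) = 0 := by
    intro k hk
    simp only [Finset.mem_range, not_lt] at hk
    rw [conv_zero_of_big ℓ p q k (by omega), zero_mul]
  rw [tsum_eq_sum hzero]
  apply Finset.sum_congr rfl
  intro k hk
  simp only [Finset.mem_range] at hk
  have hk' : k ≤ ℓ + 1 := by omega
  rw [conv_formula ℓ p q hq0' hq1' k hk', conv_formula ℓ p' q hq0' hq1' k hk']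
  have hc : (((ℓ + 1).choose k : ℝ) * q ^ k * (1 - q) ^ (ℓ + 1 - k) /
      (q * (1 - q) * ((ℓ : ℝ) + 1))) ≠ 0 := by
    have h1 : (0 : ℝ) < ((ℓ + 1).choose k : ℝ) := by
      exact_mod_cast Nat.choose_pos hk'
    have h2 : (0 : ℝ) < 1 - q := by linarith
    positivity
  congr 1
  rw [mul_div_mul_left _ _ hc]
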